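/- Let T: E → F be a bounded A-linear adjointable operator between Hilbert A-modules with closed range. Then Ker(T) is orthogonally complemented in E with complement Ran(T*), and Ran(T) is orthogonally complemented in F with complement Ker(T*). -/

import Mathlib

set_option linter.unusedSectionVars false
set_option synthInstance.maxHeartbeats 1000000
set_option maxHeartbeats 1000000





/- Framework: Hilbert C*-modules over a C*-algebra `A` (via Mathlib's `CStarModule`),
densely defined operators as `LinearPMap`s, `A`-valued orthogonality, adjoints,
regularity, graphs inside `E ⊕ F`. -/

open scoped InnerProductSpace RightActions WithCStarModule

/-- The `CStarModule` class of the older Mathlib: a Hilbert C⋆-module with a *right* action of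
`A` (via `Aᵐᵒᵖ`), `A`-linear on the right in the second variable. Mathlib's `CStarModule` is now
a left module, so the old notion is restated here under a new name. -/
class RightCStarModule (A : outParam <| Type*) (E : Type*) [NonUnitalSemiring A] [StarRing A]
    [Module ℂ A] [AddCommGroup E] [Module ℂ E] [PartialOrder A] [SMul Aᵐᵒᵖ E] [Norm A] [Norm E]
    extends Inner A E where
  inner_add_right {x} {y} {z} : inner x (y + z) = inner x y + inner x z
  inner_self_nonneg {x} : 0 ≤ inner x x
  inner_self {x} : inner x x = 0 ↔ x = 0
  inner_op_smul_right {a : A} {x y : E} : inner x (y <• a) = inner x y * a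
  inner_smul_right_complex {z : ℂ} {x} {y} : inner x (z • y) = z • inner x y
  star_inner x y : star (inner x y) = inner y x
  norm_eq_sqrt_norm_inner_self x : ‖x‖ = √‖inner x x‖

namespace RightCStarModule

/-- Type synonym carrying the conjugate complex structure and the left action
`a • y = y <• star a`, which turns a right module into a (new-style) `CStarModule`. -/
def ConjSyn (A E : Type*) : Type _ := E

section Syn

variable {A E : Type*}

instance instACGSyn [AddCommGroup E] : AddCommGroup (ConjSyn A E) := ‹AddCommGroup E›

instance instNormSyn [Norm E] : Norm (ConjSyn A E) := ‹Norm E›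

instance instModuleSyn [AddCommGroup E] [Module ℂ E] : Module ℂ (ConjSyn A E) :=
  Module.compHom E (starRingEnd ℂ)

instance instSMulSyn [Star A] [SMul Aᵐᵒᵖ E] : SMul A (ConjSyn A E) :=
  ⟨fun a (y : E) => (y <• star a : E)⟩

end Syn

section Transfer

variable {A E : Type*} [NonUnitalCStarAlgebra A] [PartialOrder A]
  [AddCommGroup E] [Module ℂ E] [SMul Aᵐᵒᵖ E] [Norm E] [RightCStarModule A E]

instance instCStarSyn : CStarModule A (ConjSyn A E) where
  inner x y := Inner.inner A (show E from y) (show E from x)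
  inner_add_right {x y z} := by
    change Inner.inner A ((show E from y) + (show E from z)) (show E from x) = _
    rw [← RightCStarModule.star_inner (show E from x), RightCStarModule.inner_add_right, star_add,
      RightCStarModule.star_inner, RightCStarModule.star_inner]
  inner_self_nonneg {x} := RightCStarModule.inner_self_nonneg (x := (show E from x))
  inner_self {x} := RightCStarModule.inner_self (x := (show E from x))
  inner_op_smul_right {a x y} := by
    change Inner.inner A ((show E from y) <• star a) (show E from x)
      = a * Inner.inner A (show E from y) (show E from x)
    rw [← RightCStarModule.star_inner (show E from x), RightCStarModule.inner_op_smul_right,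
      star_mul, star_star, RightCStarModule.star_inner]
  inner_smul_right_complex {z x y} := by
    change Inner.inner A ((starRingEnd ℂ z) • (show E from y)) (show E from x)
      = z • Inner.inner A (show E from y) (show E from x)
    rw [← RightCStarModule.star_inner (show E from x), RightCStarModule.inner_smul_right_complex,
      star_smul, RightCStarModule.star_inner]
    simp
  star_inner x y := RightCStarModule.star_inner (show E from y) (show E from x)
  norm_eq_sqrt_norm_inner_self x := RightCStarModule.norm_eq_sqrt_norm_inner_self (show E from x)

end Transfer

/-- The normed-space core of an old-style Hilbert C⋆-module. -/
lemma normedSpaceCore' (A : Type*) {E : Type*} [NonUnitalCStarAlgebra A] [PartialOrder A]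
    [StarOrderedRing A] [AddCommGroup E] [Module ℂ E] [SMul Aᵐᵒᵖ E] [Norm E]
    [RightCStarModule A E] : NormedSpace.Core ℂ E where
  norm_nonneg x := (CStarModule.normedSpaceCore A (E := ConjSyn A E)).norm_nonneg x
  norm_eq_zero_iff x := (CStarModule.normedSpaceCore A (E := ConjSyn A E)).norm_eq_zero_iff x
  norm_smul c x := by
    have h := (CStarModule.normedSpaceCore A (E := ConjSyn A E)).norm_smul (starRingEnd ℂ c) x
    calc ‖c • x‖ = ‖(starRingEnd ℂ (starRingEnd ℂ c)) • x‖ := by rw [Complex.conj_conj]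
      _ = ‖starRingEnd ℂ c‖ * ‖x‖ := h
      _ = ‖c‖ * ‖x‖ := by rw [Complex.norm_conj]
  norm_triangle x y := (CStarModule.normedSpaceCore A (E := ConjSyn A E)).norm_triangle x y

section Prod

variable {A : Type*} [NonUnitalCStarAlgebra A] [PartialOrder A]
variable {E F : Type*}
variable [NormedAddCommGroup E] [Module ℂ E] [SMul Aᵐᵒᵖ E]
variable [NormedAddCommGroup F] [Module ℂ F] [SMul Aᵐᵒᵖ F]
variable [RightCStarModule A E] [RightCStarModule A F]

noncomputable instance instNormProd : Norm C⋆ᵐᵒᵈ(A, E × F) where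
  norm x := √‖⟪x.1, x.1⟫_A + ⟪x.2, x.2⟫_A‖

variable [StarOrderedRing A]

noncomputable instance instProd : RightCStarModule A C⋆ᵐᵒᵈ(A, E × F) where
  inner x y := ⟪x.1, y.1⟫_A + ⟪x.2, y.2⟫_A
  inner_add_right {x y z} := by
    change ⟪x.1, y.1 + z.1⟫_A + ⟪x.2, y.2 + z.2⟫_A
      = (⟪x.1, y.1⟫_A + ⟪x.2, y.2⟫_A) + (⟪x.1, z.1⟫_A + ⟪x.2, z.2⟫_A)
    rw [RightCStarModule.inner_add_right, RightCStarModule.inner_add_right]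
    abel
  inner_self_nonneg {x} :=
    add_nonneg RightCStarModule.inner_self_nonneg RightCStarModule.inner_self_nonneg
  inner_self {x} := by
    change ⟪x.1, x.1⟫_A + ⟪x.2, x.2⟫_A = 0 ↔ x = 0
    constructor
    · intro h
      have n1 := RightCStarModule.inner_self_nonneg (A := A) (x := x.1)
      have n2 := RightCStarModule.inner_self_nonneg (A := A) (x := x.2)
      have h1 : ⟪x.1, x.1⟫_A = 0 := le_antisymm ((le_add_of_nonneg_right n2).trans_eq h) n1
      have h2 : ⟪x.2, x.2⟫_A = 0 := le_antisymm ((le_add_of_nonneg_left n1).trans_eq h) n2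
      exact Prod.ext (RightCStarModule.inner_self.mp h1) (RightCStarModule.inner_self.mp h2)
    · intro h
      subst h
      change ⟪(0 : E), 0⟫_A + ⟪(0 : F), 0⟫_A = 0
      rw [(RightCStarModule.inner_self (A := A) (x := (0 : E))).mpr rfl,
        (RightCStarModule.inner_self (A := A) (x := (0 : F))).mpr rfl, add_zero]
  inner_op_smul_right {a x y} := by
    change ⟪x.1, y.1 <• a⟫_A + ⟪x.2, y.2 <• a⟫_A = (⟪x.1, y.1⟫_A + ⟪x.2, y.2⟫_A) * a
    rw [RightCStarModule.inner_op_smul_right, RightCStarModule.inner_op_smul_right, add_mul]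
  inner_smul_right_complex {z x y} := by
    change ⟪x.1, z • y.1⟫_A + ⟪x.2, z • y.2⟫_A = z • (⟪x.1, y.1⟫_A + ⟪x.2, y.2⟫_A)
    rw [RightCStarModule.inner_smul_right_complex, RightCStarModule.inner_smul_right_complex,
      smul_add]
  star_inner x y := by
    change star (⟪x.1, y.1⟫_A + ⟪x.2, y.2⟫_A) = ⟪y.1, x.1⟫_A + ⟪y.2, x.2⟫_A
    rw [star_add, RightCStarModule.star_inner, RightCStarModule.star_inner]
  norm_eq_sqrt_norm_inner_self x := rfl

noncomputable instance instNACGProd : NormedAddCommGroup C⋆ᵐᵒᵈ(A, E × F) :=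
  NormedAddCommGroup.ofCore (RightCStarModule.normedSpaceCore' A)

end Prod

end RightCStarModule

namespace RegularOperators

variable (A : Type*) [NonUnitalCStarAlgebra A] [PartialOrder A] [StarOrderedRing A]

section Defs

variable {E F : Type*}
  [NormedAddCommGroup E] [Module ℂ E] [SMul Aᵐᵒᵖ E] [RightCStarModule A E]
  [NormedAddCommGroup F] [Module ℂ F] [SMul Aᵐᵒᵖ F] [RightCStarModule A F]

/-- Orthogonal complement of a subset w.r.t. the `A`-valued inner product. -/
def ortho (S : Set E) : Set E := {y | ∀ u ∈ S, ⟪u, y⟫_A = 0}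

/-- `S` is orthogonally complemented (an orthogonal summand): every element of `E`
decomposes as a sum of an element of `S` and an element of `S^⊥`. -/
def OrthoComplemented (S : Set E) : Prop := ∀ z : E, ∃ u ∈ S, ∃ v ∈ ortho A S, z = u + v

/-- A partially defined operator is `A`-linear (for the right `A`-module action). -/
def AModuleMap (t : E →ₗ.[ℂ] F) : Prop :=
  ∀ (a : A) (x : t.domain), ∃ hx : (x : E) <• a ∈ t.domain, t ⟨(x : E) <• a, hx⟩ = (t x) <• a

/-- Kernel of a partially defined operator, as a subset of `E`. -/
def kerSet (t : E →ₗ.[ℂ] F) : Set E := {x | ∃ hx : x ∈ t.domain, t ⟨x, hx⟩ = 0}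

/-- Range of a partially defined operator. -/
def ranSet (t : E →ₗ.[ℂ] F) : Set F := {y | ∃ x : t.domain, t x = y}

/-- Domain of the adjoint: those `y` for which some `z` satisfies `⟪tx, y⟫ = ⟪x, z⟫`
for all `x` in the domain of `t`. -/
def adjDomain (t : E →ₗ.[ℂ] F) : Set F :=
  {y | ∃ z : E, ∀ x : t.domain, ⟪t x, y⟫_A = ⟪(x : E), z⟫_A}

/-- `s` is the adjoint operator `t*` of `t`. -/
structure IsAdjoint (t : E →ₗ.[ℂ] F) (s : F →ₗ.[ℂ] E) : Prop where
  dom : (s.domain : Set F) = adjDomain A t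
  inner_eq : ∀ (x : t.domain) (y : s.domain), ⟪t x, (y : F)⟫_A = ⟪(x : E), s y⟫_A

/-- The range of `1 + t*t` (where `s` plays the role of `t*`). -/
def onePlusRange (t : E →ₗ.[ℂ] F) (s : F →ₗ.[ℂ] E) : Set E :=
  {u | ∃ (x : t.domain) (h : t x ∈ s.domain), (x : E) + s ⟨t x, h⟩ = u}

/-- `t` is a regular operator with adjoint `s`: it is `A`-linear, densely defined,
closed, adjointable with densely defined adjoint, and `1 + t*t` has dense range. -/
structure IsRegular (t : E →ₗ.[ℂ] F) (s : F →ₗ.[ℂ] E) : Prop where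
  amod : AModuleMap A t
  denseDom : Dense (t.domain : Set E)
  closedGraph : IsClosed (t.graph : Set (E × F))
  adj : IsAdjoint A t s
  denseAdjDom : Dense (s.domain : Set F)
  denseOnePlusRange : Dense (onePlusRange t s)

/-- The graph of `t` inside the Hilbert `A`-module `E ⊕ F`. -/
def graphSet (t : E →ₗ.[ℂ] F) : Set (C⋆ᵐᵒᵈ(A, E × F)) :=
  {w | ∃ x : t.domain, WithCStarModule.equiv A (E × F) w = ((x : E), t x)}

/-- The range of `P_F ∘ P_{G(t)^⊥}`, i.e. the image of `G(t)^⊥ ⊆ E ⊕ F` under the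
canonical projection onto `F`. -/
def pfRange (t : E →ₗ.[ℂ] F) : Set F :=
  {y | ∃ w ∈ ortho A (graphSet A t), (WithCStarModule.equiv A (E × F) w).2 = y}

end Defs

end RegularOperators

namespace RightCStarModule

section Helpers

variable {A E : Type*} [NonUnitalCStarAlgebra A] [PartialOrder A]
  [AddCommGroup E] [Module ℂ E] [SMul Aᵐᵒᵖ E] [Norm E] [RightCStarModule A E]

lemma inner_add_left {x y z : E} : ⟪x + y, z⟫_A = ⟪x, z⟫_A + ⟪y, z⟫_A := by
  rw [← RightCStarModule.star_inner z (x + y), RightCStarModule.inner_add_right, star_add,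
    RightCStarModule.star_inner, RightCStarModule.star_inner]

lemma inner_smul_left_complex {z : ℂ} {x y : E} : ⟪z • x, y⟫_A = star z • ⟪x, y⟫_A := by
  rw [← RightCStarModule.star_inner y (z • x), RightCStarModule.inner_smul_right_complex,
    star_smul, RightCStarModule.star_inner]

lemma inner_sub_right {x y z : E} : ⟪x, y - z⟫_A = ⟪x, y⟫_A - ⟪x, z⟫_A :=
  CStarModule.inner_sub_left (A := A) (E := ConjSyn A E) (x := y) (y := z) (z := x)

lemma inner_sub_left {x y z : E} : ⟪x - y, z⟫_A = ⟪x, z⟫_A - ⟪y, z⟫_A :=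
  CStarModule.inner_sub_right (A := A) (E := ConjSyn A E) (x := z) (y := x) (z := y)

lemma inner_zero_right {x : E} : ⟪x, 0⟫_A = 0 :=
  CStarModule.inner_zero_left (A := A) (E := ConjSyn A E) (x := x)

lemma inner_zero_left {x : E} : ⟪0, x⟫_A = 0 :=
  CStarModule.inner_zero_right (A := A) (E := ConjSyn A E) (x := x)

lemma norm_sq_eq {x : E} : ‖x‖ ^ 2 = ‖⟪x, x⟫_A‖ :=
  CStarModule.norm_sq_eq A (E := ConjSyn A E) (x := x)

variable [StarOrderedRing A]

variable (E) in
lemma norm_inner_le {x y : E} : ‖⟪x, y⟫_A‖ ≤ ‖x‖ * ‖y‖ := by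
  have h := CStarModule.norm_inner_le (A := A) (ConjSyn A E) (x := y) (y := x)
  rw [mul_comm]
  exact h

end Helpers

lemma continuous_inner {A E : Type*} [NonUnitalCStarAlgebra A] [PartialOrder A]
    [StarOrderedRing A] [NormedAddCommGroup E] [NormedSpace ℂ E] [SMul Aᵐᵒᵖ E]
    [RightCStarModule A E] : Continuous (fun x : E × E => ⟪x.1, x.2⟫_A) := by
  rw [continuous_iff_continuousAt]
  rintro ⟨x0, y0⟩
  rw [ContinuousAt, tendsto_iff_norm_sub_tendsto_zero]
  have key : ∀ p : E × E,
      ‖⟪p.1, p.2⟫_A - ⟪x0, y0⟫_A‖ ≤ ‖p.1 - x0‖ * ‖p.2‖ + ‖x0‖ * ‖p.2 - y0‖ := fun p => by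
    have h : ⟪p.1, p.2⟫_A - ⟪x0, y0⟫_A = ⟪p.1 - x0, p.2⟫_A + ⟪x0, p.2 - y0⟫_A := by
      rw [inner_sub_left, inner_sub_right]; abel
    rw [h]
    exact (norm_add_le _ _).trans (add_le_add (norm_inner_le E) (norm_inner_le E))
  refine squeeze_zero (fun _ => norm_nonneg _) (fun p => key p) ?_
  have hg : Continuous (fun p : E × E => ‖p.1 - x0‖ * ‖p.2‖ + ‖x0‖ * ‖p.2 - y0‖) := by fun_prop
  simpa using hg.tendsto (x0, y0)

end RightCStarModule

section CRAux

variable {A : Type*} [NonUnitalCStarAlgebra A] [PartialOrder A] [StarOrderedRing A]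
variable {E : Type*} [NormedAddCommGroup E] [NormedSpace ℂ E] [SMul Aᵐᵒᵖ E] [RightCStarModule A E]

namespace CRAux

lemma inner_ext {u v : E} (h : ∀ x : E, ⟪x, u⟫_A = ⟪x, v⟫_A) : u = v := by
  have h2 : ⟪u - v, u - v⟫_A = 0 := by
    rw [RightCStarModule.inner_sub_right, h (u - v), sub_self]
  rw [← sub_eq_zero]
  exact RightCStarModule.inner_self.mp h2

variable (A E) in
/-- The subalgebra of adjointable continuous linear maps on `E`. -/
def adjSub : Subalgebra ℂ (E →L[ℂ] E) where
  carrier := {f | ∃ g : E →L[ℂ] E, ∀ x y : E, ⟪f x, y⟫_A = ⟪x, g y⟫_A}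
  mul_mem' := by
    rintro f₁ f₂ ⟨g₁, hg₁⟩ ⟨g₂, hg₂⟩
    exact ⟨g₂ * g₁, fun x y => by
      simp only [ContinuousLinearMap.mul_apply, hg₁, hg₂]⟩
  add_mem' := by
    rintro f₁ f₂ ⟨g₁, hg₁⟩ ⟨g₂, hg₂⟩
    exact ⟨g₁ + g₂, fun x y => by
      simp only [ContinuousLinearMap.add_apply, RightCStarModule.inner_add_left,
        RightCStarModule.inner_add_right, hg₁ x y, hg₂ x y]⟩
  algebraMap_mem' := fun c => ⟨(starRingEnd ℂ c) • (1 : E →L[ℂ] E), fun x y => by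
    rw [Algebra.algebraMap_eq_smul_one]
    simp only [ContinuousLinearMap.smul_apply, ContinuousLinearMap.one_apply,
      RightCStarModule.inner_smul_left_complex, RightCStarModule.inner_smul_right_complex,
      starRingEnd_apply]⟩

lemma adj_norm_le {f g : E →L[ℂ] E} (h : ∀ x y : E, ⟪f x, y⟫_A = ⟪x, g y⟫_A) :
    ‖g‖ ≤ ‖f‖ := by
  refine ContinuousLinearMap.opNorm_le_bound _ (norm_nonneg f) fun y => ?_
  by_cases hg : g y = 0
  · rw [hg, norm_zero]; positivity
  · have h1 : ‖g y‖ ^ 2 = ‖⟪f (g y), y⟫_A‖ := by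
      rw [h (g y) y, RightCStarModule.norm_sq_eq]
    have h2 : ‖⟪f (g y), y⟫_A‖ ≤ ‖f‖ * ‖g y‖ * ‖y‖ := by
      calc ‖⟪f (g y), y⟫_A‖ ≤ ‖f (g y)‖ * ‖y‖ := RightCStarModule.norm_inner_le E
        _ ≤ (‖f‖ * ‖g y‖) * ‖y‖ := by
            gcongr; exact f.le_opNorm (g y)
        _ = ‖f‖ * ‖g y‖ * ‖y‖ := by ring
    have hgy : (0:ℝ) < ‖g y‖ := norm_pos_iff.mpr hg
    nlinarith [sq_nonneg ‖g y‖]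


lemma adj_unique {f g g' : E →L[ℂ] E} (h : ∀ x y : E, ⟪f x, y⟫_A = ⟪x, g y⟫_A)
    (h' : ∀ x y : E, ⟪f x, y⟫_A = ⟪x, g' y⟫_A) : g = g' :=
  ContinuousLinearMap.ext fun y => inner_ext (A := A) fun x => ((h x y).symm.trans (h' x y))

noncomputable def adjCLM (f : ↥(adjSub A E)) : E →L[ℂ] E := f.2.choose

lemma adjCLM_spec (f : ↥(adjSub A E)) :
    ∀ x y : E, ⟪(f : E →L[ℂ] E) x, y⟫_A = ⟪x, adjCLM f y⟫_A := f.2.choose_spec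

lemma adjCLM_swap (f : ↥(adjSub A E)) :
    ∀ x y : E, ⟪adjCLM f x, y⟫_A = ⟪x, (f : E →L[ℂ] E) y⟫_A := fun x y => by
  calc ⟪adjCLM f x, y⟫_A = star ⟪y, adjCLM f x⟫_A := (RightCStarModule.star_inner _ _).symm
    _ = star ⟪(f : E →L[ℂ] E) y, x⟫_A := by rw [adjCLM_spec f y x]
    _ = ⟪x, (f : E →L[ℂ] E) y⟫_A := RightCStarModule.star_inner _ _

noncomputable instance : Star ↥(adjSub A E) :=
  ⟨fun f => ⟨adjCLM f, ⟨(f : E →L[ℂ] E), adjCLM_swap f⟩⟩⟩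

lemma coe_star (f : ↥(adjSub A E)) : ((star f : ↥(adjSub A E)) : E →L[ℂ] E) = adjCLM f := rfl

lemma star_spec (f : ↥(adjSub A E)) :
    ∀ x y : E, ⟪(f : E →L[ℂ] E) x, y⟫_A = ⟪x, ((star f : ↥(adjSub A E)) : E →L[ℂ] E) y⟫_A :=
  adjCLM_spec f

lemma star_eq_of {f : ↥(adjSub A E)} {g : E →L[ℂ] E}
    (h : ∀ x y : E, ⟪(f : E →L[ℂ] E) x, y⟫_A = ⟪x, g y⟫_A) :
    ((star f : ↥(adjSub A E)) : E →L[ℂ] E) = g :=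
  adj_unique (star_spec f) h

noncomputable instance : StarRing ↥(adjSub A E) where
  star_involutive f := Subtype.ext <| star_eq_of (adjCLM_swap f)
  star_mul f g := Subtype.ext <| by
    rw [MulMemClass.coe_mul]
    refine star_eq_of fun x y => ?_
    rw [MulMemClass.coe_mul, ContinuousLinearMap.mul_apply, ContinuousLinearMap.mul_apply,
      star_spec f, star_spec g]
  star_add f g := Subtype.ext <| by
    rw [AddMemClass.coe_add]
    refine star_eq_of fun x y => ?_
    rw [AddMemClass.coe_add, ContinuousLinearMap.add_apply, ContinuousLinearMap.add_apply,
      RightCStarModule.inner_add_left, RightCStarModule.inner_add_right, star_spec f, star_spec g]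

noncomputable instance : StarModule ℂ ↥(adjSub A E) where
  star_smul c f := Subtype.ext <| by
    rw [SetLike.val_smul]
    refine star_eq_of fun x y => ?_
    rw [SetLike.val_smul, ContinuousLinearMap.smul_apply, ContinuousLinearMap.smul_apply,
      RightCStarModule.inner_smul_left_complex, RightCStarModule.inner_smul_right_complex, star_spec f]

lemma norm_star' (f : ↥(adjSub A E)) : ‖star f‖ = ‖f‖ := by
  refine le_antisymm ?_ ?_
  · exact adj_norm_le (star_spec f)
  · exact adj_norm_le (fun x y => adjCLM_swap f x y)

noncomputable instance : CStarRing ↥(adjSub A E) where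
  norm_mul_self_le f := by
    have h1 : ‖f‖ * ‖f‖ ≤ ‖star f * f‖ := by
      have hb : ‖(f : E →L[ℂ] E)‖ ≤ Real.sqrt ‖star f * f‖ := by
        refine ContinuousLinearMap.opNorm_le_bound _ (Real.sqrt_nonneg _) fun x => ?_
        have h2 : ‖(f : E →L[ℂ] E) x‖ ^ 2 ≤ ‖star f * f‖ * ‖x‖ ^ 2 := by
          calc ‖(f : E →L[ℂ] E) x‖ ^ 2 = ‖⟪(f : E →L[ℂ] E) x, (f : E →L[ℂ] E) x⟫_A‖ :=
              RightCStarModule.norm_sq_eq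
            _ = ‖⟪x, ((star f * f : ↥(adjSub A E)) : E →L[ℂ] E) x⟫_A‖ := by
              rw [star_spec f, MulMemClass.coe_mul, ContinuousLinearMap.mul_apply]
            _ ≤ ‖x‖ * ‖((star f * f : ↥(adjSub A E)) : E →L[ℂ] E) x‖ := RightCStarModule.norm_inner_le E
            _ ≤ ‖x‖ * (‖star f * f‖ * ‖x‖) := by
              gcongr
              exact ContinuousLinearMap.le_opNorm _ x
            _ = ‖star f * f‖ * ‖x‖ ^ 2 := by ring
        have h3 : ‖(f : E →L[ℂ] E) x‖ ≤ Real.sqrt (‖star f * f‖ * ‖x‖ ^ 2) := by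
          rw [← Real.sqrt_sq (norm_nonneg ((f : E →L[ℂ] E) x))]
          exact Real.sqrt_le_sqrt h2
        refine h3.trans (le_of_eq ?_)
        rw [Real.sqrt_mul (norm_nonneg (star f * f)), Real.sqrt_sq (norm_nonneg x)]
      calc ‖f‖ * ‖f‖ ≤ Real.sqrt ‖star f * f‖ * Real.sqrt ‖star f * f‖ := by
            exact mul_le_mul hb hb (norm_nonneg _) (Real.sqrt_nonneg _)
        _ = ‖star f * f‖ := Real.mul_self_sqrt (norm_nonneg _)
    exact h1


open Filter Topology in
lemma isClosed_adjSub [CompleteSpace E] :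
    IsClosed ((adjSub A E : Set (E →L[ℂ] E))) := by
  refine IsSeqClosed.isClosed fun u f hu hf => ?_
  choose g hg using hu
  have hcau : CauchySeq u := hf.cauchySeq
  have hgc : CauchySeq g := by
    rw [Metric.cauchySeq_iff] at hcau ⊢
    intro ε hε
    obtain ⟨N, hN⟩ := hcau ε hε
    refine ⟨N, fun m hm n hn => ?_⟩
    have hsub : ∀ x y : E, ⟪(u m - u n) x, y⟫_A = ⟪x, (g m - g n) y⟫_A := fun x y => by
      simp only [ContinuousLinearMap.sub_apply, RightCStarModule.inner_sub_left,
        RightCStarModule.inner_sub_right, hg m x y, hg n x y]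
    calc dist (g m) (g n) = ‖g m - g n‖ := dist_eq_norm _ _
      _ ≤ ‖u m - u n‖ := adj_norm_le hsub
      _ = dist (u m) (u n) := (dist_eq_norm _ _).symm
      _ < ε := hN m hm n hn
  obtain ⟨G, hG⟩ := cauchySeq_tendsto_of_complete hgc
  refine ⟨G, fun x y => ?_⟩
  have hax : Tendsto (fun n => (u n) x) atTop (𝓝 (f x)) :=
    ((ContinuousLinearMap.apply ℂ E x).continuous.tendsto f).comp hf
  have hgy : Tendsto (fun n => (g n) y) atTop (𝓝 (G y)) :=
    ((ContinuousLinearMap.apply ℂ E y).continuous.tendsto G).comp hG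
  have h1 : Tendsto (fun n => ⟪(u n) x, y⟫_A) atTop (𝓝 ⟪f x, y⟫_A) :=
    (RightCStarModule.continuous_inner.tendsto (f x, y)).comp (hax.prodMk_nhds tendsto_const_nhds)
  have h2 : Tendsto (fun n => ⟪x, (g n) y⟫_A) atTop (𝓝 ⟪x, G y⟫_A) :=
    (RightCStarModule.continuous_inner.tendsto (x, G y)).comp (tendsto_const_nhds.prodMk_nhds hgy)
  have heq : (fun n => ⟪(u n) x, y⟫_A) = fun n => ⟪x, (g n) y⟫_A :=
    funext fun n => hg n x y
  rw [heq] at h1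
  exact tendsto_nhds_unique h1 h2

noncomputable instance [CompleteSpace E] : CompleteSpace ↥(adjSub A E) :=
  (isClosed_adjSub (A := A) (E := E)).completeSpace_coe

noncomputable instance [CompleteSpace E] : CStarAlgebra ↥(adjSub A E) where

example [CompleteSpace E] (r : ↥(adjSub A E)) (hr : IsSelfAdjoint r) :
    cfc (id : ℝ → ℝ) r = r := cfc_id ℝ r


lemma norm_coe (f : ↥(adjSub A E)) : ‖f‖ = ‖(f : E →L[ℂ] E)‖ := rfl

lemma spectrum_gap [CompleteSpace E] (r : ↥(adjSub A E)) (hr : IsSelfAdjoint r) {c : ℝ}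
    (hc : 0 < c)
    (hbb : ∀ w ∈ Set.range ((r : E →L[ℂ] E) : E → E), c * ‖w‖ ≤ ‖(r : E →L[ℂ] E) w‖) :
    ∀ lam ∈ spectrum ℝ r, lam = 0 ∨ c ≤ |lam| := by
  intro lam hlam
  by_contra hcon
  push_neg at hcon
  obtain ⟨hlam0, hlamc⟩ := hcon
  have hlampos : 0 < |lam| := abs_pos.mpr hlam0
  set δ : ℝ := min (|lam|/2) ((c - |lam|)/4) with hδdef
  have hδpos : 0 < δ := lt_min (by positivity) (by linarith)
  have hδ1 : δ ≤ |lam|/2 := min_le_left _ _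
  have hδ2 : δ ≤ (c - |lam|)/4 := min_le_right _ _
  set f : ℝ → ℝ := fun t => max 0 (1 - |t - lam|/δ) with hfdef
  have hfc : Continuous f := by fun_prop
  have hf0 : ∀ t, 0 ≤ f t := fun t => le_max_left _ _
  have hfle : ∀ t, f t ≤ 1 := fun t => by
    have h1 : 0 ≤ |t - lam|/δ := by positivity
    exact max_le (by norm_num) (by linarith)
  have hfzero : ∀ t, δ ≤ |t - lam| → f t = 0 := fun t ht => by
    have : 1 - |t - lam|/δ ≤ 0 := by
      rw [sub_nonpos, le_div_iff₀ hδpos]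
      linarith
    exact max_eq_left this
  have hflam : f lam = 1 := by
    simp only [hfdef, sub_self, abs_zero, zero_div, sub_zero]
    norm_num
  set g : ℝ → ℝ := fun t => f t * t / max (t^2) (lam^2/4) with hgdef
  have hden : ∀ t : ℝ, max (t^2) (lam^2/4) ≠ 0 := fun t => by
    have : (0:ℝ) < lam^2/4 := by positivity
    exact ne_of_gt (lt_of_lt_of_le this (le_max_right _ _))
  have hgc : Continuous g := by
    apply Continuous.div (by fun_prop) (by fun_prop) hden
  have htg : ∀ t, t * g t = f t := by
    intro t
    rcases le_or_gt (|lam|/2) (|t|) with h | h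
    · have ht2 : lam^2/4 ≤ t^2 := by
        have h1 := abs_nonneg lam
        have h2 := sq_abs t
        have h3 := sq_abs lam
        nlinarith
      have ht0 : t ≠ 0 := by
        intro h0
        rw [h0, abs_zero] at h
        linarith
      rw [hgdef]
      simp only [max_eq_left ht2]
      field_simp
    · have hft : f t = 0 := by
        refine hfzero t ?_
        have h1 : |lam| - |t| ≤ |t - lam| := by
          have := abs_sub_abs_le_abs_sub lam t
          rw [abs_sub_comm] at this
          linarith
        linarith
      rw [hgdef]
      simp only [hft, zero_mul, zero_div, mul_zero]
  set q : ↥(adjSub A E) := cfc f r with hqdef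
  have hq : q = r * cfc g r := by
    calc q = cfc (fun t => t * g t) r := cfc_congr (fun t _ => (htg t).symm)
      _ = cfc (fun t : ℝ => t) r * cfc g r :=
          cfc_mul _ _ r (continuous_id.continuousOn) (hgc.continuousOn)
      _ = r * cfc g r := by rw [cfc_id' ℝ r]
  have hnq : 1 ≤ ‖q‖ := by
    have h1 := norm_apply_le_norm_cfc f r hlam (hfc.continuousOn) hr
    rw [hflam] at h1
    simpa using h1
  have hsmall : ‖(r - algebraMap ℝ _ lam) * q‖ ≤ δ := by
    have heq : (r - algebraMap ℝ _ lam) * q = cfc (fun t => (t - lam) * f t) r := by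
      have h1 : r - algebraMap ℝ ↥(adjSub A E) lam = cfc (fun t : ℝ => t - lam) r := by
        rw [cfc_sub (fun t : ℝ => t) (fun _ : ℝ => lam) r (continuous_id.continuousOn)
          continuousOn_const, cfc_id' ℝ r, cfc_const lam r]
      rw [h1, ← cfc_mul (fun t : ℝ => t - lam) f r (by fun_prop) (hfc.continuousOn)]
    rw [heq]
    refine norm_cfc_le hδpos.le fun t _ => ?_
    rcases le_or_gt δ (|t - lam|) with h | h
    · rw [hfzero t h]
      simp [hδpos.le]
    · rw [Real.norm_eq_abs, abs_mul]
      calc |t - lam| * |f t| ≤ δ * 1 := by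
            refine mul_le_mul h.le ?_ (abs_nonneg _) hδpos.le
            rw [abs_of_nonneg (hf0 t)]
            exact hfle t
        _ = δ := mul_one δ
  obtain ⟨y, hy⟩ : ∃ y : E, (1/2 : ℝ) * ‖y‖ < ‖(q : E →L[ℂ] E) y‖ := by
    by_contra hall
    push_neg at hall
    have : ‖q‖ ≤ 1/2 := by
      rw [norm_coe]
      exact ContinuousLinearMap.opNorm_le_bound _ (by norm_num) fun y => by
        have := hall y
        linarith
    linarith
  set w : E := (q : E →L[ℂ] E) y with hwdef
  have hwpos : 0 < ‖w‖ := lt_of_le_of_lt (by positivity) hy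
  have hwran : w ∈ Set.range ((r : E →L[ℂ] E) : E → E) := by
    refine ⟨((cfc g r : ↥(adjSub A E)) : E →L[ℂ] E) y, ?_⟩
    rw [hwdef, hq, MulMemClass.coe_mul, ContinuousLinearMap.mul_apply]
  have hrw : ‖(r : E →L[ℂ] E) w - lam • w‖ ≤ δ * ‖y‖ := by
    have halg : (((algebraMap ℝ ↥(adjSub A E) lam : ↥(adjSub A E))) : E →L[ℂ] E) w
        = lam • w := by
      rw [Subalgebra.coe_algebraMap, Algebra.algebraMap_eq_smul_one,
        ContinuousLinearMap.smul_apply, ContinuousLinearMap.one_apply]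
    have heq2 : (((r - algebraMap ℝ _ lam) * q : ↥(adjSub A E)) : E →L[ℂ] E) y
        = (r : E →L[ℂ] E) w - lam • w := by
      rw [MulMemClass.coe_mul, ContinuousLinearMap.mul_apply, AddSubgroupClass.coe_sub,
        ContinuousLinearMap.sub_apply, ← hwdef, halg]
    calc ‖(r : E →L[ℂ] E) w - lam • w‖
        = ‖(((r - algebraMap ℝ _ lam) * q : ↥(adjSub A E)) : E →L[ℂ] E) y‖ := by rw [heq2]
      _ ≤ ‖(((r - algebraMap ℝ _ lam) * q : ↥(adjSub A E)) : E →L[ℂ] E)‖ * ‖y‖ :=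
          ContinuousLinearMap.le_opNorm _ y
      _ ≤ δ * ‖y‖ := by
          refine mul_le_mul_of_nonneg_right ?_ (norm_nonneg y)
          rw [← norm_coe]
          exact hsmall
  have hybound : ‖y‖ ≤ 2 * ‖w‖ := by
    have := hy
    linarith
  have hfinal : c * ‖w‖ ≤ ‖(r : E →L[ℂ] E) w‖ := hbb w hwran
  have h5 : ‖(r : E →L[ℂ] E) w‖ ≤ δ * ‖y‖ + |lam| * ‖w‖ := by
    calc ‖(r : E →L[ℂ] E) w‖ = ‖((r : E →L[ℂ] E) w - lam • w) + lam • w‖ := by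
          rw [sub_add_cancel]
      _ ≤ ‖(r : E →L[ℂ] E) w - lam • w‖ + ‖lam • w‖ := norm_add_le _ _
      _ ≤ δ * ‖y‖ + |lam| * ‖w‖ := by
          rw [norm_smul, Real.norm_eq_abs]
          exact add_le_add_left hrw _
  have h6 : δ * ‖y‖ ≤ 2 * δ * ‖w‖ := by
    calc δ * ‖y‖ ≤ δ * (2 * ‖w‖) := mul_le_mul_of_nonneg_left hybound hδpos.le
      _ = 2 * δ * ‖w‖ := by ring
  nlinarith

lemma exists_pinv [CompleteSpace E] (r : ↥(adjSub A E)) (hr : IsSelfAdjoint r) {c : ℝ}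
    (hc : 0 < c)
    (hbb : ∀ w ∈ Set.range ((r : E →L[ℂ] E) : E → E), c * ‖w‖ ≤ ‖(r : E →L[ℂ] E) w‖) :
    ∃ s : ↥(adjSub A E), r * s * r = r ∧ r * r * s = r := by
  have hgap := spectrum_gap r hr hc hbb
  set h : ℝ → ℝ := fun t => t / max (t^2) (c^2/2) with hhdef
  have hden : ∀ t : ℝ, max (t^2) (c^2/2) ≠ 0 := fun t => by
    have : (0:ℝ) < c^2/2 := by positivity
    exact ne_of_gt (lt_of_lt_of_le this (le_max_right _ _))
  have hhc : Continuous h := by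
    apply Continuous.div (by fun_prop) (by fun_prop) hden
  have hkey : ∀ t ∈ spectrum ℝ r, t * h t * t = t ∧ t * t * h t = t := by
    intro t ht
    rcases hgap t ht with h0 | hge
    · rw [h0]
      constructor <;> ring
    · have ht2 : c^2/2 ≤ t^2 := by
        have h1 : c^2 ≤ t^2 := by
          have := sq_abs t
          nlinarith [abs_nonneg t]
        have h2 : (0:ℝ) < c^2 := by positivity
        linarith
      have ht0 : t ≠ 0 := by
        intro h0
        rw [h0, abs_zero] at hge
        linarith
      rw [hhdef]
      simp only [max_eq_left ht2]
      constructor <;> field_simp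
  refine ⟨cfc h r, ?_, ?_⟩
  · calc r * cfc h r * r
        = cfc (fun t : ℝ => t) r * cfc h r * cfc (fun t : ℝ => t) r := by rw [cfc_id' ℝ r]
      _ = cfc (fun t : ℝ => t * h t) r * cfc (fun t : ℝ => t) r := by
          rw [cfc_mul (fun t : ℝ => t) h r (continuous_id.continuousOn) (hhc.continuousOn)]
      _ = cfc (fun t : ℝ => t * h t * t) r := by
          rw [cfc_mul (fun t : ℝ => t * h t) (fun t : ℝ => t) r
            (by fun_prop) (continuous_id.continuousOn)]
      _ = cfc (fun t : ℝ => t) r := cfc_congr (fun t ht => (hkey t ht).1)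
      _ = r := cfc_id' ℝ r
  · calc r * r * cfc h r
        = cfc (fun t : ℝ => t) r * cfc (fun t : ℝ => t) r * cfc h r := by rw [cfc_id' ℝ r]
      _ = cfc (fun t : ℝ => t * t) r * cfc h r := by
          rw [cfc_mul (fun t : ℝ => t) (fun t : ℝ => t) r
            (continuous_id.continuousOn) (continuous_id.continuousOn)]
      _ = cfc (fun t : ℝ => t * t * h t) r := by
          rw [cfc_mul (fun t : ℝ => t * t) h r (by fun_prop) (hhc.continuousOn)]
      _ = cfc (fun t : ℝ => t) r := cfc_congr (fun t ht => (hkey t ht).2)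
      _ = r := cfc_id' ℝ r

end CRAux
end CRAux



open RegularOperators
variable {A : Type*} [NonUnitalCStarAlgebra A] [PartialOrder A] [StarOrderedRing A]
variable {E F : Type*}
  [NormedAddCommGroup E] [Module ℂ E] [SMul Aᵐᵒᵖ E] [RightCStarModule A E] [CompleteSpace E]
  [NormedAddCommGroup F] [Module ℂ F] [SMul Aᵐᵒᵖ F] [RightCStarModule A F] [CompleteSpace F]

/-- for a bounded `A`-linear adjointable operator `T` with closed range,
`Ker(T)` is orthogonally complemented in `E` with complement `Ran(T*)`, and `Ran(T)`
is orthogonally complemented in `F` with complement `Ker(T*)`. -/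
theorem ker_and_range_orthoComplemented_of_closed_range
    (T : E →L[ℂ] F) (Ts : F →L[ℂ] E)
    (hmod : ∀ (a : A) (x : E), T (x <• a) = (T x) <• a)
    (hadj : ∀ (x : E) (y : F), ⟪T x, y⟫_A = ⟪x, Ts y⟫_A)
    (hran : IsClosed (Set.range T)) :
    (OrthoComplemented A {x : E | T x = 0} ∧
      ortho A {x : E | T x = 0} = Set.range Ts) ∧
    (OrthoComplemented A (Set.range T) ∧
      ortho A (Set.range T) = {y : F | Ts y = 0}) := by
  classical
  letI : NormedSpace ℂ E := .ofCore (RightCStarModule.normedSpaceCore' A)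
  letI : NormedSpace ℂ F := .ofCore (RightCStarModule.normedSpaceCore' A)
  clear hmod
  -- the operator `R = Ts ∘ T` as a self-adjoint element of the adjointable operators on `E`
  have hTsT : ∀ x y : E, ⟪Ts (T x), y⟫_A = ⟪x, Ts (T y)⟫_A := fun x y => by
    calc ⟪Ts (T x), y⟫_A = star ⟪y, Ts (T x)⟫_A := (RightCStarModule.star_inner _ _).symm
      _ = star ⟪T y, T x⟫_A := by rw [hadj y (T x)]
      _ = ⟪T x, T y⟫_A := RightCStarModule.star_inner _ _
      _ = ⟪x, Ts (T y)⟫_A := hadj x (T y)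
  set R : E →L[ℂ] E := Ts.comp T with hRdef
  have hRapp : ∀ x : E, R x = Ts (T x) := fun x => rfl
  have hRmem : R ∈ CRAux.adjSub A E := ⟨R, fun x y => hTsT x y⟩
  set r : ↥(CRAux.adjSub A E) := ⟨R, hRmem⟩ with hrdef
  have hrcoe : ((r : E →L[ℂ] E) : E → E) = R := rfl
  have hrsa : IsSelfAdjoint r := Subtype.ext (CRAux.star_eq_of (fun x y => hTsT x y))
  -- open mapping constant for `T` onto its closed range
  obtain ⟨K, hK0, hK⟩ : ∃ K > 0, ∀ y ∈ Set.range T, ∃ x, T x = y ∧ ‖x‖ ≤ K * ‖y‖ := by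
    set p : Submodule ℂ F := LinearMap.range (T : E →ₗ[ℂ] F) with hpdef
    have hpc : IsClosed (p : Set F) := by
      have : (p : Set F) = Set.range T := LinearMap.coe_range _
      rw [this]; exact hran
    haveI : CompleteSpace ↥p := hpc.completeSpace_coe
    set Tc : E →L[ℂ] ↥p := T.codRestrict p (fun x => LinearMap.mem_range_self (T : E →ₗ[ℂ] F) x) with hTcdef
    have hsurj : Function.Surjective Tc := by
      rintro ⟨y, hy⟩
      obtain ⟨x, hx⟩ := hy
      exact ⟨x, Subtype.ext hx⟩
    obtain ⟨K, hK0, hK⟩ := Tc.exists_preimage_norm_le hsurj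
    refine ⟨K, hK0, fun y hy => ?_⟩
    have hyp : y ∈ p := by rw [hpdef]; exact LinearMap.mem_range.mpr hy
    obtain ⟨x, hx1, hx2⟩ := hK ⟨y, hyp⟩
    refine ⟨x, ?_, ?_⟩
    · have := congrArg (Subtype.val) hx1
      exact this
    · simpa using hx2
  -- `R` is bounded below on its range
  have hbb : ∀ w ∈ Set.range ((r : E →L[ℂ] E) : E → E), (K^2)⁻¹ * ‖w‖ ≤ ‖(r : E →L[ℂ] E) w‖ := by
    rw [hrcoe]
    rintro w ⟨x₀, rfl⟩
    -- step 1 : ‖T x₀‖ ≤ K * ‖R x₀‖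
    have step1 : ‖T x₀‖ ≤ K * ‖R x₀‖ := by
      obtain ⟨x', hx'1, hx'2⟩ := hK (T x₀) ⟨x₀, rfl⟩
      have h1 : ‖T x₀‖^2 ≤ K * ‖T x₀‖ * ‖R x₀‖ := by
        calc ‖T x₀‖^2 = ‖⟪T x₀, T x₀⟫_A‖ := RightCStarModule.norm_sq_eq
          _ = ‖⟪x', R x₀⟫_A‖ := by rw [hRapp x₀, ← hadj x' (T x₀), hx'1]
          _ ≤ ‖x'‖ * ‖R x₀‖ := RightCStarModule.norm_inner_le E
          _ ≤ K * ‖T x₀‖ * ‖R x₀‖ :=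
              mul_le_mul_of_nonneg_right hx'2 (norm_nonneg _)
      rcases eq_or_lt_of_le (norm_nonneg (T x₀)) with h0 | h0
      · rw [← h0]; positivity
      · nlinarith
    -- step 2 : ‖T (R x₀)‖ ≤ K * ‖R (R x₀)‖
    have step2 : ‖T (R x₀)‖ ≤ K * ‖R (R x₀)‖ := by
      obtain ⟨x'', hx''1, hx''2⟩ := hK (T (R x₀)) ⟨R x₀, rfl⟩
      have h1 : ‖T (R x₀)‖^2 ≤ K * ‖T (R x₀)‖ * ‖R (R x₀)‖ := by
        calc ‖T (R x₀)‖^2 = ‖⟪T (R x₀), T (R x₀)⟫_A‖ := RightCStarModule.norm_sq_eq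
          _ = ‖⟪x'', R (R x₀)⟫_A‖ := by rw [hRapp (R x₀), ← hadj x'' (T (R x₀)), hx''1]
          _ ≤ ‖x''‖ * ‖R (R x₀)‖ := RightCStarModule.norm_inner_le E
          _ ≤ K * ‖T (R x₀)‖ * ‖R (R x₀)‖ :=
              mul_le_mul_of_nonneg_right hx''2 (norm_nonneg _)
      rcases eq_or_lt_of_le (norm_nonneg (T (R x₀))) with h0 | h0
      · rw [← h0]; positivity
      · nlinarith
    -- step 3 : ‖R x₀‖^2 ≤ ‖T (R x₀)‖ * ‖T x₀‖
    have step3 : ‖R x₀‖^2 ≤ ‖T (R x₀)‖ * ‖T x₀‖ := by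
      calc ‖R x₀‖^2 = ‖⟪R x₀, R x₀⟫_A‖ := RightCStarModule.norm_sq_eq
        _ = ‖⟪T (R x₀), T x₀⟫_A‖ := by
            nth_rewrite 2 [hRapp x₀]
            rw [hadj (R x₀) (T x₀)]
        _ ≤ ‖T (R x₀)‖ * ‖T x₀‖ := RightCStarModule.norm_inner_le F
    rcases eq_or_lt_of_le (norm_nonneg (R x₀)) with h0 | h0
    · rw [← h0, mul_zero]; positivity
    · have hfin : ‖R x₀‖^2 ≤ K^2 * ‖R (R x₀)‖ * ‖R x₀‖ := by
        calc ‖R x₀‖^2 ≤ ‖T (R x₀)‖ * ‖T x₀‖ := step3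
          _ ≤ (K * ‖R (R x₀)‖) * (K * ‖R x₀‖) := by
              exact mul_le_mul step2 step1 (norm_nonneg _) (by positivity)
          _ = K^2 * ‖R (R x₀)‖ * ‖R x₀‖ := by ring
      rw [inv_mul_le_iff₀ (by positivity)]
      nlinarith
  -- pseudo-inverse from the spectral gap
  obtain ⟨s, hs1, hs2⟩ := CRAux.exists_pinv r hrsa (by positivity) hbb
  set S : E →L[ℂ] E := (s : E →L[ℂ] E) with hSdef
  have hrrs : ∀ z : E, R (R (S z)) = R z := fun z => by
    have h1 := congrArg (fun a : ↥(CRAux.adjSub A E) => ((a : E →L[ℂ] E) : E → E) z) hs2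
    simpa [MulMemClass.coe_mul, ContinuousLinearMap.mul_apply] using h1
  have hrsr : ∀ z : E, R (S (R z)) = R z := fun z => by
    have h1 := congrArg (fun a : ↥(CRAux.adjSub A E) => ((a : E →L[ℂ] E) : E → E) z) hs1
    simpa [MulMemClass.coe_mul, ContinuousLinearMap.mul_apply] using h1
  clear hs1 hs2
  -- kernel decomposition
  have hTu : ∀ z : E, T (z - R (S z)) = 0 := by
    intro z
    have hRu : R (z - R (S z)) = 0 := by
      rw [map_sub, hrrs z, sub_self]
    have hinner : ⟪T (z - R (S z)), T (z - R (S z))⟫_A = 0 := by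
      rw [hadj (z - R (S z)) (T (z - R (S z)))]
      rw [show Ts (T (z - R (S z))) = R (z - R (S z)) from rfl, hRu]
      exact RightCStarModule.inner_zero_right
    exact RightCStarModule.inner_self.mp hinner
  -- elements of the form `Ts w` are orthogonal to the kernel
  have hTs_ortho : ∀ w : F, ∀ u ∈ {x : E | T x = 0}, ⟪u, Ts w⟫_A = 0 := by
    intro w u hu
    rw [← hadj u w, hu]
    exact RightCStarModule.inner_zero_left
  -- every element orthogonal to the kernel is `Ts (T (S v))`
  have hortho_eq : ∀ v ∈ ortho A {x : E | T x = 0}, v = Ts (T (S v)) := by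
    intro v hv
    have hmem : (v - R (S v)) ∈ {x : E | T x = 0} := hTu v
    have h1 : ⟪v - R (S v), v⟫_A = 0 := hv _ hmem
    have h2 : ⟪v - R (S v), R (S v)⟫_A = 0 := by
      have h := hadj (v - R (S v)) (T (S v))
      rw [hTu v] at h
      rw [hRapp (S v)] at h ⊢
      rw [← h]
      exact RightCStarModule.inner_zero_left
    have h3 : ⟪v - R (S v), v - R (S v)⟫_A = 0 := by
      rw [RightCStarModule.inner_sub_right, h1, h2, sub_self]
    have h4 : v - R (S v) = 0 := RightCStarModule.inner_self.mp h3
    have h5 : v = R (S v) := by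
      rw [sub_eq_zero] at h4
      exact h4
    exact h5
  constructor
  · constructor
    · -- OrthoComplemented of the kernel
      intro z
      refine ⟨z - R (S z), hTu z, R (S z), ?_, by abel⟩
      intro u hu
      exact hTs_ortho (T (S z)) u hu
    · -- ortho of kernel equals range of Ts
      apply Set.eq_of_subset_of_subset
      · intro v hv
        exact ⟨T (S v), (hortho_eq v hv).symm⟩
      · rintro v ⟨w, rfl⟩
        intro u hu
        exact hTs_ortho w u hu
  · constructor
    · -- OrthoComplemented of the range
      intro y
      have hvo : Ts y ∈ ortho A {x : E | T x = 0} := fun u hu => hTs_ortho y u hu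
      have hveq : Ts y = Ts (T (S (Ts y))) := hortho_eq (Ts y) hvo
      refine ⟨T (S (Ts y)), ⟨S (Ts y), rfl⟩, y - T (S (Ts y)), ?_, by abel⟩
      have hTsz : Ts (y - T (S (Ts y))) = 0 := by
        rw [map_sub, ← hveq, sub_self]
      rintro u ⟨x, rfl⟩
      rw [hadj x (y - T (S (Ts y))), hTsz]
      exact RightCStarModule.inner_zero_right
    · -- ortho of range equals kernel of Ts
      apply Set.eq_of_subset_of_subset
      · intro y hy
        have h1 : ∀ x : E, ⟪x, Ts y⟫_A = 0 := fun x => by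
          rw [← hadj x y]
          exact hy (T x) ⟨x, rfl⟩
        have h2 : ⟪Ts y, Ts y⟫_A = 0 := h1 (Ts y)
        exact RightCStarModule.inner_self.mp h2
      · intro y hy
        rintro u ⟨x, rfl⟩
        rw [hadj x y, hy]
        exact RightCStarModule.inner_zero_right
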